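/- arXiv:1604.08929 — 3 statements merged into one kernel-verified Lean document; each statement's English description precedes it below -/
import Mathlib

section
/- Let c be an integer with c ≥ 3 and c ≢ 1 (mod 3). Then there is exactly one numerical semigroup with the Arf property having multiplicity 3 and conductor c, namely: S = ⟨3, c+1, c+2⟩ if c ≡ 0 (mod 3), and S = ⟨3, c, c+2⟩ if c ≡ 2 (mod 3). -/
/-- A numerical semigroup: a subset of ℕ containing 0, closed under addition,
with finite complement. -/
def IsNumericalSemigroup (S : Set ℕ) : Prop :=
  0 ∈ S ∧ (∀ a ∈ S, ∀ b ∈ S, a + b ∈ S) ∧ Sᶜ.Finite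

/-- The Arf property: for all x ≥ y ≥ z in S, x + y - z ∈ S. -/
def HasArfProperty (S : Set ℕ) : Prop :=
  ∀ x ∈ S, ∀ y ∈ S, ∀ z ∈ S, z ≤ y → y ≤ x → x + y - z ∈ S

/-- The conductor: the least c such that every n ≥ c lies in S. -/
noncomputable def conductorOf (S : Set ℕ) : ℕ := sInf {c | ∀ n, c ≤ n → n ∈ S}

/-- The Frobenius number: the largest natural number not in S. -/
noncomputable def frobeniusOf (S : Set ℕ) : ℕ := sSup {n | n ∉ S}

/-- The genus: the number of gaps of S. -/
noncomputable def genusOf (S : Set ℕ) : ℕ := Sᶜ.ncard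

/-- The multiplicity: the least positive element of S. -/
noncomputable def multiplicityOf (S : Set ℕ) : ℕ := sInf {n | n ∈ S ∧ 0 < n}

/-- w(i) = min { s ∈ S : s ≡ i (mod m) }. -/
noncomputable def aperyW (S : Set ℕ) (m i : ℕ) : ℕ := sInf {s | s ∈ S ∧ s % m = i}

/-- The cocycle h(i,j) = (w(i) + w(j) - w((i+j) mod m)) / m, as a rational number. -/
noncomputable def cocycle (S : Set ℕ) (m i j : ℕ) : ℚ :=
  ((aperyW S m i : ℚ) + (aperyW S m j : ℚ) - (aperyW S m ((i + j) % m) : ℚ)) / (m : ℚ)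

/-- An Arf sequence (x₁, …, xₙ), 0-indexed: xₙ ≥ ⋯ ≥ x₁ ≥ 2, and each
x_{i+1} is either a sum x_i + ⋯ + x_j for some j ≤ i, or at least x_i + ⋯ + x₁. -/
def ArfSeq (n : ℕ) (x : Fin n → ℕ) : Prop :=
  1 ≤ n ∧ Monotone x ∧ (∀ i, 2 ≤ x i) ∧
  ∀ i : Fin n, ∀ h : i.1 + 1 < n,
    (∃ j : Fin n, j ≤ i ∧ x ⟨i.1 + 1, h⟩ = ∑ k ∈ Finset.Icc j i, x k) ∨
    (∑ k ∈ Finset.Iic i, x k) ≤ x ⟨i.1 + 1, h⟩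

/-- The set S(x₁,…,xₙ) = {0} ∪ {xₙ + ⋯ + x_k : 1 ≤ k ≤ n} ∪ {z : z ≥ x₁ + ⋯ + xₙ}. -/
def arfSet (n : ℕ) (x : Fin n → ℕ) : Set ℕ :=
  {z | z = 0 ∨ (∃ k : Fin n, z = ∑ i ∈ Finset.Ici k, x i) ∨ (∑ i, x i) ≤ z}

/-- The numerical-semigroup-like set generated by A ⊆ ℕ. -/
def genNS (A : Set ℕ) : Set ℕ := (AddSubmonoid.closure A : Set ℕ)

/-- The candidate set: multiples of 3 together with everything ≥ c. -/
def Tset (c : ℕ) : Set ℕ := {n | 3 ∣ n ∨ c ≤ n}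

lemma three_mul_mem_genNS {A : Set ℕ} (h3 : (3 : ℕ) ∈ A) (k : ℕ) :
    3 * k ∈ genNS A := by
  show 3 * k ∈ AddSubmonoid.closure A
  induction k with
  | zero => simpa using (AddSubmonoid.closure A).zero_mem
  | succ k ih =>
    have h : 3 * k + 3 ∈ AddSubmonoid.closure A :=
      add_mem ih (AddSubmonoid.subset_closure h3)
    have he : 3 * (k + 1) = 3 * k + 3 := by ring
    rwa [he]

lemma genNS_subset_Tset (c : ℕ) (A : Set ℕ) (hA : ∀ a ∈ A, 3 ∣ a ∨ c ≤ a) :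
    genNS A ⊆ Tset c := by
  have : AddSubmonoid.closure A ≤
      { carrier := Tset c
        zero_mem' := Or.inl ⟨0, rfl⟩
        add_mem' := by
          intro a b ha hb
          simp only [Tset, Set.mem_setOf_eq] at *
          omega } := by
    rw [AddSubmonoid.closure_le]
    intro a ha
    exact hA a ha
  exact this

lemma genA_eq (c : ℕ) (h0 : c % 3 = 0) :
    genNS {3, c + 1, c + 2} = Tset c := by
  apply Set.Subset.antisymm
  · apply genNS_subset_Tset
    intro a ha
    rcases ha with rfl | rfl | rfl
    · exact Or.inl ⟨1, rfl⟩
    · omega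
    · omega
  · intro n hn
    rcases hn with hd | hcn
    · obtain ⟨k, rfl⟩ := hd
      exact three_mul_mem_genNS (by simp) k
    · have hr : n % 3 = 0 ∨ n % 3 = 1 ∨ n % 3 = 2 := by omega
      rcases hr with h | h | h
      · have he : n = 3 * (n / 3) := by omega
        rw [he]; exact three_mul_mem_genNS (by simp) _
      · have he : n = (c + 1) + 3 * ((n - (c + 1)) / 3) := by omega
        rw [he]
        exact AddSubmonoid.add_mem _
          (AddSubmonoid.subset_closure (by simp)) (three_mul_mem_genNS (by simp) _)
      · have he : n = (c + 2) + 3 * ((n - (c + 2)) / 3) := by omega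
        rw [he]
        exact AddSubmonoid.add_mem _
          (AddSubmonoid.subset_closure (by simp)) (three_mul_mem_genNS (by simp) _)

lemma genB_eq (c : ℕ) (h2 : c % 3 = 2) :
    genNS {3, c, c + 2} = Tset c := by
  apply Set.Subset.antisymm
  · apply genNS_subset_Tset
    intro a ha
    rcases ha with rfl | rfl | rfl
    · exact Or.inl ⟨1, rfl⟩
    · omega
    · omega
  · intro n hn
    rcases hn with hd | hcn
    · obtain ⟨k, rfl⟩ := hd
      exact three_mul_mem_genNS (by simp) k
    · have hr : n % 3 = 0 ∨ n % 3 = 1 ∨ n % 3 = 2 := by omega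
      rcases hr with h | h | h
      · have he : n = 3 * (n / 3) := by omega
        rw [he]; exact three_mul_mem_genNS (by simp) _
      · have he : n = (c + 2) + 3 * ((n - (c + 2)) / 3) := by omega
        rw [he]
        exact AddSubmonoid.add_mem _
          (AddSubmonoid.subset_closure (by simp)) (three_mul_mem_genNS (by simp) _)
      · have he : n = c + 3 * ((n - c) / 3) := by omega
        rw [he]
        exact AddSubmonoid.add_mem _
          (AddSubmonoid.subset_closure (by simp)) (three_mul_mem_genNS (by simp) _)

lemma Tset_props (c : ℕ) (hc : 3 ≤ c) (h1 : c % 3 ≠ 1) :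
    IsNumericalSemigroup (Tset c) ∧ HasArfProperty (Tset c) ∧
      multiplicityOf (Tset c) = 3 ∧ conductorOf (Tset c) = c := by
  refine ⟨⟨Or.inl ⟨0, rfl⟩, ?_, ?_⟩, ?_, ?_, ?_⟩
  · intro a ha b hb
    simp only [Tset, Set.mem_setOf_eq] at *
    omega
  · apply Set.Finite.subset (Set.finite_Iio c)
    intro n hn
    simp only [Tset, Set.mem_compl_iff, Set.mem_setOf_eq] at hn
    simp only [Set.mem_Iio]
    omega
  · intro x hx y hy z hz hzy hyx
    simp only [Tset, Set.mem_setOf_eq] at *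
    omega
  · have hne : {n | n ∈ Tset c ∧ 0 < n}.Nonempty :=
      ⟨3, Or.inl ⟨1, rfl⟩, by norm_num⟩
    have hmem := Nat.sInf_mem hne
    have hle : multiplicityOf (Tset c) ≤ 3 :=
      Nat.sInf_le ⟨Or.inl ⟨1, rfl⟩, by norm_num⟩
    obtain ⟨hmT, hmpos⟩ := hmem
    rcases hmT with hd | hcc
    · unfold multiplicityOf at *
      omega
    · unfold multiplicityOf at *
      omega
  · unfold conductorOf
    have hcK : c ∈ {c' | ∀ n, c' ≤ n → n ∈ Tset c} := by
      intro n hn; exact Or.inr hn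
    have hle : sInf {c' | ∀ n, c' ≤ n → n ∈ Tset c} ≤ c := Nat.sInf_le hcK
    have hmem := Nat.sInf_mem ⟨c, hcK⟩
    by_contra hne
    have hlt : sInf {c' | ∀ n, c' ≤ n → n ∈ Tset c} ≤ c - 1 := by omega
    have := hmem (c - 1) hlt
    rcases this with hd | hcc <;> omega

lemma forward_eq (c : ℕ) (hc : 3 ≤ c) (S : Set ℕ)
    (hNS : IsNumericalSemigroup S) (hArf : HasArfProperty S)
    (hm : multiplicityOf S = 3) (hco : conductorOf S = c) : S = Tset c := by
  obtain ⟨h0S, hadd, hfin⟩ := hNS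
  -- positive elements exist
  have hinf : S.Infinite := by
    have := hfin.infinite_compl
    simpa using this
  have hpos : {n | n ∈ S ∧ 0 < n}.Nonempty := by
    obtain ⟨b, hb, hb0⟩ := hinf.exists_gt 0
    exact ⟨b, hb, hb0⟩
  have h3S : (3 : ℕ) ∈ S := by
    have := Nat.sInf_mem hpos
    rw [show sInf {n | n ∈ S ∧ 0 < n} = multiplicityOf S from rfl, hm] at this
    exact this.1
  have h1S : (1 : ℕ) ∉ S := by
    intro h
    have := Nat.sInf_le (show 1 ∈ {n | n ∈ S ∧ 0 < n} from ⟨h, one_pos⟩)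
    rw [show sInf {n | n ∈ S ∧ 0 < n} = multiplicityOf S from rfl, hm] at this
    omega
  have h2S : (2 : ℕ) ∉ S := by
    intro h
    have := Nat.sInf_le (show 2 ∈ {n | n ∈ S ∧ 0 < n} from ⟨h, by norm_num⟩)
    rw [show sInf {n | n ∈ S ∧ 0 < n} = multiplicityOf S from rfl, hm] at this
    omega
  -- adding multiples of 3
  have tail : ∀ a ∈ S, ∀ k : ℕ, a + 3 * k ∈ S := by
    intro a ha k
    induction k with
    | zero => simpa using ha
    | succ k ih =>
      have : a + 3 * k + 3 ∈ S := hadd _ ih _ h3S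
      have he : a + 3 * (k + 1) = a + 3 * k + 3 := by ring
      rwa [he]
  -- the conductor set
  have hKne : {c' | ∀ n, c' ≤ n → n ∈ S}.Nonempty := by
    obtain ⟨m, hmub⟩ := hfin.bddAbove
    refine ⟨m + 1, fun n hn => ?_⟩
    by_contra hns
    have := hmub (show n ∈ Sᶜ from hns)
    omega
  have hcK : ∀ n, c ≤ n → n ∈ S := by
    have := Nat.sInf_mem hKne
    rwa [show sInf {c' | ∀ n, c' ≤ n → n ∈ S} = conductorOf S from rfl, hco] at this
  ext n
  constructor
  · intro hn
    by_contra hcon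
    have hnd : ¬ (3 ∣ n) ∧ n < c := by
      simp only [Tset, Set.mem_setOf_eq, not_or, not_le] at hcon
      exact hcon
    obtain ⟨hnd3, hnc⟩ := hnd
    have hn0 : n ≠ 0 := by omega
    have hn1 : n ≠ 1 := by intro h; exact h1S (h ▸ hn)
    have hn2 : n ≠ 2 := by intro h; exact h2S (h ▸ hn)
    have hn3 : n ≠ 3 := by omega
    have hn4 : 4 ≤ n := by
      rcases Nat.lt_or_ge n 4 with h | h
      · interval_cases n <;> simp_all
      · exact h
    have hmod : n % 3 = 1 ∨ n % 3 = 2 := by omega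
    have hzS : 3 * (n / 3) ∈ S := by
      have := tail 0 h0S (n / 3)
      simpa using this
    have harf := hArf n hn n hn (3 * (n / 3)) hzS (by omega) (le_refl n)
    have heq : n + n - 3 * (n / 3) = n + n % 3 := by omega
    rw [heq] at harf
    -- every m ≥ n is in S
    have hall : ∀ m, n ≤ m → m ∈ S := by
      intro m hnm
      have hr : m % 3 = 0 ∨ m % 3 = n % 3 ∨ m % 3 = (n + n % 3) % 3 := by omega
      rcases hr with h | h | h
      · have he : m = 0 + 3 * (m / 3) := by omega
        rw [he]; exact tail 0 h0S _
      · have he : m = n + 3 * ((m - n) / 3) := by omega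
        rw [he]; exact tail n hn _
      · have hge : n + n % 3 ≤ m := by omega
        have he : m = (n + n % 3) + 3 * ((m - (n + n % 3)) / 3) := by omega
        rw [he]; exact tail _ harf _
    have : conductorOf S ≤ n := Nat.sInf_le hall
    omega
  · intro hn
    rcases hn with hd | hcn
    · obtain ⟨k, rfl⟩ := hd
      have := tail 0 h0S k
      simpa using this
    · exact hcK n hcn

theorem arf_multiplicity_three (c : ℕ) (hc : 3 ≤ c) (h1 : c % 3 ≠ 1) :
    ∀ S : Set ℕ,
      (IsNumericalSemigroup S ∧ HasArfProperty S ∧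
        multiplicityOf S = 3 ∧ conductorOf S = c) ↔
      ((c % 3 = 0 ∧ S = genNS {3, c + 1, c + 2}) ∨
       (c % 3 = 2 ∧ S = genNS {3, c, c + 2})) := by
  intro S
  constructor
  · rintro ⟨hNS, hArf, hm, hco⟩
    have hS : S = Tset c := forward_eq c hc S hNS hArf hm hco
    have hmod : c % 3 = 0 ∨ c % 3 = 2 := by omega
    rcases hmod with h | h
    · exact Or.inl ⟨h, by rw [hS, genA_eq c h]⟩
    · exact Or.inr ⟨h, by rw [hS, genB_eq c h]⟩
  · rintro (⟨h0, rfl⟩ | ⟨h2, rfl⟩)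
    · rw [genA_eq c h0]
      exact ⟨(Tset_props c hc h1).1, (Tset_props c hc h1).2.1,
        (Tset_props c hc h1).2.2.1, (Tset_props c hc h1).2.2.2⟩
    · rw [genB_eq c h2]
      exact ⟨(Tset_props c hc h1).1, (Tset_props c hc h1).2.1,
        (Tset_props c hc h1).2.2.1, (Tset_props c hc h1).2.2.2⟩
end

section
/- Let c be an integer with c ≥ 4 and c ≢ 1 (mod 4), and let S ⊆ ℕ. Then S is a numerical semigroup with the Arf property, multiplicity 4 and conductor c if and only if: (i) c ≡ 0 (mod 4) and S = ⟨4, 4t+2, c+1, c+3⟩ for some integer t with 1 ≤ t ≤ c/4; or (ii) c ≡ 2 (mod 4) and S = ⟨4, 4t+2, c+1, c+3⟩ for some integer t with 1 ≤ t ≤ (c−2)/4; or (iii) c ≡ 3 (mod 4) and S = ⟨4, c, c+2, c+3⟩. -/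
section ArfAux

lemma mem_genNS {A : Set ℕ} {a : ℕ} (h : a ∈ A) : a ∈ genNS A :=
  AddSubmonoid.subset_closure h

lemma genNS_add_mem {A : Set ℕ} {x y : ℕ} (hx : x ∈ genNS A) (hy : y ∈ genNS A) :
    x + y ∈ genNS A := AddSubmonoid.add_mem _ hx hy

lemma genNS_mul_mem {A : Set ℕ} {a : ℕ} (h : a ∈ A) (k : ℕ) : k * a ∈ genNS A := by
  have := AddSubmonoid.nsmul_mem (S := AddSubmonoid.closure A) (AddSubmonoid.subset_closure h) k
  simpa [smul_eq_mul, genNS] using this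

lemma mem_genNS4 {A : Set ℕ} {b n : ℕ} (h4 : (4:ℕ) ∈ A) (hb : b ∈ A)
    (hbn : b ≤ n) (hmod : n % 4 = b % 4) : n ∈ genNS A := by
  have h : n = b + (n - b) / 4 * 4 := by omega
  rw [h]
  exact genNS_add_mem (mem_genNS hb) (genNS_mul_mem h4 _)

lemma genNS_subset {A : Set ℕ} {T : Set ℕ} (h0 : (0:ℕ) ∈ T)
    (hadd : ∀ a ∈ T, ∀ b ∈ T, a + b ∈ T) (hA : A ⊆ T) : genNS A ⊆ T := by
  intro n hn
  exact (AddSubmonoid.closure_le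
    (S := ⟨⟨T, fun {a b} ha hb => hadd a ha b hb⟩, h0⟩)).mpr hA hn

lemma mult4_mem {S : Set ℕ} (h0 : 0 ∈ S) (hadd : ∀ a ∈ S, ∀ b ∈ S, a + b ∈ S)
    (h4 : 4 ∈ S) : ∀ n : ℕ, n % 4 = 0 → n ∈ S := by
  intro n hn
  obtain ⟨k, rfl⟩ : ∃ k, n = 4 * k := ⟨n / 4, by omega⟩
  clear hn
  induction k with
  | zero => simpa using h0
  | succ k ih =>
      have h : 4 * (k + 1) = 4 * k + 4 := by ring
      rw [h]
      exact hadd _ ih 4 h4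

lemma climb {S : Set ℕ} (h0 : 0 ∈ S) (hadd : ∀ a ∈ S, ∀ b ∈ S, a + b ∈ S) (h4 : 4 ∈ S)
    {v : ℕ} (hv : v ∈ S) : ∀ n, n % 4 = v % 4 → v ≤ n → n ∈ S := by
  intro n h1 h2
  have h3 : n = v + (n - v) := by omega
  rw [h3]
  exact hadd v hv _ (mult4_mem h0 hadd h4 _ (by omega))

lemma conductor_forward {S : Set ℕ} (hfin : Sᶜ.Finite) {c : ℕ} (hcpos : 0 < c)
    (hc : conductorOf S = c) : (∀ n, c ≤ n → n ∈ S) ∧ c - 1 ∉ S := by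
  have hne : {k | ∀ n, k ≤ n → n ∈ S}.Nonempty := by
    obtain ⟨N, hN⟩ := hfin.bddAbove
    refine ⟨N + 1, fun n hn => ?_⟩
    by_contra h
    exact absurd (hN h) (by omega)
  have hmem : conductorOf S ∈ {k | ∀ n, k ≤ n → n ∈ S} := Nat.sInf_mem hne
  rw [hc] at hmem
  refine ⟨hmem, fun hbad => ?_⟩
  have hle : conductorOf S ≤ c - 1 := Nat.sInf_le (fun n hn => by
    rcases eq_or_lt_of_le hn with h | h
    · exact h ▸ hbad
    · exact hmem n (by omega))
  omega

lemma conductor_backward {S : Set ℕ} {c : ℕ} (hcpos : 0 < c)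
    (h1 : ∀ n, c ≤ n → n ∈ S) (h2 : c - 1 ∉ S) : conductorOf S = c := by
  refine le_antisymm (Nat.sInf_le h1) ?_
  refine le_csInf ⟨c, h1⟩ fun b hb => ?_
  by_contra h
  exact h2 (hb (c - 1) (by omega))

lemma mult_forward {S : Set ℕ} (hm : multiplicityOf S = 4)
    (hne : {n | n ∈ S ∧ 0 < n}.Nonempty) : 4 ∈ S ∧ 1 ∉ S ∧ 2 ∉ S ∧ 3 ∉ S := by
  have hmem : multiplicityOf S ∈ {n | n ∈ S ∧ 0 < n} := Nat.sInf_mem hne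
  rw [hm] at hmem
  refine ⟨hmem.1, ?_, ?_, ?_⟩ <;>
  · intro hk
    have hle := Nat.sInf_le (show _ ∈ {n | n ∈ S ∧ 0 < n} from ⟨hk, by norm_num⟩)
    rw [show sInf {n | n ∈ S ∧ 0 < n} = multiplicityOf S from rfl, hm] at hle
    omega

lemma mult_backward {S : Set ℕ} (h4 : 4 ∈ S) (h1 : 1 ∉ S) (h2 : 2 ∉ S) (h3 : 3 ∉ S)
    (h0 : 0 ∉ {n | n ∈ S ∧ 0 < n}) : multiplicityOf S = 4 := by
  refine le_antisymm (Nat.sInf_le ⟨h4, by norm_num⟩) ?_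
  refine le_csInf ⟨4, h4, by norm_num⟩ fun b hb => ?_
  obtain ⟨hbS, hbpos⟩ := hb
  by_contra h
  have hb3 : b = 1 ∨ b = 2 ∨ b = 3 := by omega
  rcases hb3 with rfl | rfl | rfl
  · exact h1 hbS
  · exact h2 hbS
  · exact h3 hbS

lemma genNS_even_eq (c t : ℕ) (hc4 : 4 ≤ c) (hc2 : c % 2 = 0) (ht1 : 1 ≤ t)
    (ht2 : 4 * t + 2 ≤ c + 2) :
    genNS {4, 4 * t + 2, c + 1, c + 3} =
      {n : ℕ | n % 4 = 0 ∨ (n % 2 = 0 ∧ 4 * t + 2 ≤ n) ∨ c ≤ n} := by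
  have g1 : (4:ℕ) ∈ ({4, 4 * t + 2, c + 1, c + 3} : Set ℕ) := by simp
  have g2 : (4 * t + 2 : ℕ) ∈ ({4, 4 * t + 2, c + 1, c + 3} : Set ℕ) := by simp
  have g3 : (c + 1 : ℕ) ∈ ({4, 4 * t + 2, c + 1, c + 3} : Set ℕ) := by simp
  have g4 : (c + 3 : ℕ) ∈ ({4, 4 * t + 2, c + 1, c + 3} : Set ℕ) := by simp
  apply Set.Subset.antisymm
  · refine genNS_subset (by simp) ?_ ?_
    · intro a ha b hb
      simp only [Set.mem_setOf_eq] at *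
      omega
    · intro a ha
      simp only [Set.mem_insert_iff, Set.mem_singleton_iff] at ha
      simp only [Set.mem_setOf_eq]
      omega
  · intro n hn
    simp only [Set.mem_setOf_eq] at hn
    rcases Nat.eq_zero_or_pos n with rfl | hpos
    · exact (AddSubmonoid.closure _).zero_mem
    by_cases h0 : n % 4 = 0
    · exact mem_genNS4 g1 g1 (by omega) (by omega)
    by_cases h2' : n % 4 = 2
    · exact mem_genNS4 g1 g2 (by omega) (by omega)
    by_cases hr : n % 4 = (c + 1) % 4
    · exact mem_genNS4 g1 g3 (by omega) (by omega)
    · exact mem_genNS4 g1 g4 (by omega) (by omega)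

lemma genNS_three_eq (c : ℕ) (hc4 : 4 ≤ c) (hc3 : c % 4 = 3) :
    genNS {4, c, c + 2, c + 3} = {n : ℕ | n % 4 = 0 ∨ c ≤ n} := by
  have g1 : (4:ℕ) ∈ ({4, c, c + 2, c + 3} : Set ℕ) := by simp
  have g2 : (c : ℕ) ∈ ({4, c, c + 2, c + 3} : Set ℕ) := by simp
  have g3 : (c + 2 : ℕ) ∈ ({4, c, c + 2, c + 3} : Set ℕ) := by simp
  have g4 : (c + 3 : ℕ) ∈ ({4, c, c + 2, c + 3} : Set ℕ) := by simp
  apply Set.Subset.antisymm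
  · refine genNS_subset (by simp) ?_ ?_
    · intro a ha b hb
      simp only [Set.mem_setOf_eq] at *
      omega
    · intro a ha
      simp only [Set.mem_insert_iff, Set.mem_singleton_iff] at ha
      simp only [Set.mem_setOf_eq]
      omega
  · intro n hn
    simp only [Set.mem_setOf_eq] at hn
    rcases Nat.eq_zero_or_pos n with rfl | hpos
    · exact (AddSubmonoid.closure _).zero_mem
    by_cases h0 : n % 4 = 0
    · exact mem_genNS4 g1 g1 (by omega) (by omega)
    by_cases h3' : n % 4 = 3
    · exact mem_genNS4 g1 g2 (by omega) (by omega)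
    by_cases h1' : n % 4 = 1
    · exact mem_genNS4 g1 g3 (by omega) (by omega)
    · exact mem_genNS4 g1 g4 (by omega) (by omega)

lemma even_case_main (c t : ℕ) (hc4 : 4 ≤ c) (hc2 : c % 2 = 0) (ht1 : 1 ≤ t)
    (ht2 : 4 * t + 2 ≤ c + 2) :
    IsNumericalSemigroup {n : ℕ | n % 4 = 0 ∨ (n % 2 = 0 ∧ 4 * t + 2 ≤ n) ∨ c ≤ n} ∧
    HasArfProperty {n : ℕ | n % 4 = 0 ∨ (n % 2 = 0 ∧ 4 * t + 2 ≤ n) ∨ c ≤ n} ∧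
    multiplicityOf {n : ℕ | n % 4 = 0 ∨ (n % 2 = 0 ∧ 4 * t + 2 ≤ n) ∨ c ≤ n} = 4 ∧
    conductorOf {n : ℕ | n % 4 = 0 ∨ (n % 2 = 0 ∧ 4 * t + 2 ≤ n) ∨ c ≤ n} = c := by
  refine ⟨⟨?_, ?_, ?_⟩, ?_, ?_, ?_⟩
  · simp
  · intro a ha b hb
    simp only [Set.mem_setOf_eq] at *
    omega
  · apply Set.Finite.subset (Set.finite_Iio c)
    intro n hn
    simp only [Set.mem_compl_iff, Set.mem_setOf_eq] at hn
    simp only [Set.mem_Iio]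
    omega
  · intro x hx y hy z hz h1 h2
    simp only [Set.mem_setOf_eq] at *
    omega
  · refine mult_backward ?_ ?_ ?_ ?_ ?_ <;> simp <;> omega
  · refine conductor_backward (by omega) ?_ ?_
    · intro n hn
      simp only [Set.mem_setOf_eq]
      omega
    · simp only [Set.mem_setOf_eq]
      omega

lemma three_case_main (c : ℕ) (hc4 : 4 ≤ c) (hc3 : c % 4 = 3) :
    IsNumericalSemigroup {n : ℕ | n % 4 = 0 ∨ c ≤ n} ∧
    HasArfProperty {n : ℕ | n % 4 = 0 ∨ c ≤ n} ∧
    multiplicityOf {n : ℕ | n % 4 = 0 ∨ c ≤ n} = 4 ∧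
    conductorOf {n : ℕ | n % 4 = 0 ∨ c ≤ n} = c := by
  refine ⟨⟨?_, ?_, ?_⟩, ?_, ?_, ?_⟩
  · simp
  · intro a ha b hb
    simp only [Set.mem_setOf_eq] at *
    omega
  · apply Set.Finite.subset (Set.finite_Iio c)
    intro n hn
    simp only [Set.mem_compl_iff, Set.mem_setOf_eq] at hn
    simp only [Set.mem_Iio]
    omega
  · intro x hx y hy z hz h1 h2
    simp only [Set.mem_setOf_eq] at *
    omega
  · refine mult_backward ?_ ?_ ?_ ?_ ?_ <;> simp <;> omega
  · refine conductor_backward (by omega) ?_ ?_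
    · intro n hn
      simp only [Set.mem_setOf_eq]
      omega
    · simp only [Set.mem_setOf_eq]
      omega

end ArfAux

theorem arf_multiplicity_four (c : ℕ) (hc : 4 ≤ c) (h1 : c % 4 ≠ 1) (S : Set ℕ) :
    (IsNumericalSemigroup S ∧ HasArfProperty S ∧
      multiplicityOf S = 4 ∧ conductorOf S = c) ↔
    ((c % 4 = 0 ∧ ∃ t : ℕ, 1 ≤ t ∧ t ≤ c / 4 ∧
        S = genNS {4, 4 * t + 2, c + 1, c + 3}) ∨
     (c % 4 = 2 ∧ ∃ t : ℕ, 1 ≤ t ∧ t ≤ (c - 2) / 4 ∧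
        S = genNS {4, 4 * t + 2, c + 1, c + 3}) ∨
     (c % 4 = 3 ∧ S = genNS {4, c, c + 2, c + 3})) := by
  constructor
  · rintro ⟨⟨hS0, hadd, hfin⟩, hArf, hmult, hcond⟩
    obtain ⟨hge, hc1⟩ := conductor_forward hfin (by omega) hcond
    obtain ⟨h4, hn1, hn2, hn3⟩ := mult_forward hmult ⟨c, hge c le_rfl, by omega⟩
    have hS4 := mult4_mem hS0 hadd h4
    -- no odd element below the conductor
    have hodd : ∀ x ∈ S, x % 2 = 1 → c ≤ x := by
      intro x hx hxodd
      by_contra hlt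
      push_neg at hlt
      have hx1 : x ≠ 1 := fun h => hn1 (h ▸ hx)
      have hx3 : x ≠ 3 := fun h => hn3 (h ▸ hx)
      have hx5 : 5 ≤ x := by omega
      have hw : x + x % 4 ∈ S := by
        have hz : x - x % 4 ∈ S := hS4 _ (by omega)
        have harf := hArf x hx x hx _ hz (by omega) le_rfl
        have he : x + x - (x - x % 4) = x + x % 4 := by omega
        rwa [he] at harf
      by_cases ha : (c - 1) % 4 = x % 4
      · exact hc1 (climb hS0 hadd h4 hx (c - 1) (by omega) (by omega))
      · by_cases hcase : c % 4 = 3 ∧ x % 4 = 3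
        · -- c ≡ 3, x ≡ 3 : climb from w = x + 3 to c - 1 directly
          exact hc1 (climb hS0 hadd h4 hw (c - 1) (by omega) (by omega))
        · -- in all remaining cases, c - 2 ∈ S and c - 3 ∈ S, then Arf gives c - 1
          have hc3m : c - 3 ∈ S := by
            by_cases hcp : c % 4 = 3
            · exact hS4 _ (by omega)
            · exact climb hS0 hadd h4 hx _ (by omega) (by omega)
          have hc2m : c - 2 ∈ S := by
            by_cases hcp : c % 4 = 2
            · exact hS4 _ (by omega)
            · by_cases hcp2 : c % 4 = 3
              · -- then x % 4 = 1, c - 2 ≡ 1 : climb from x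
                exact climb hS0 hadd h4 hx _ (by omega) (by omega)
              · -- c % 4 = 0, so x % 4 = 1, climb from w ≡ 2 (mod 4)
                exact climb hS0 hadd h4 hw _ (by omega) (by omega)
          have harf := hArf (c - 2) hc2m (c - 2) hc2m (c - 3) hc3m (by omega) le_rfl
          have he : c - 2 + (c - 2) - (c - 3) = c - 1 := by omega
          rw [he] at harf
          exact hc1 harf
    by_cases hcp : c % 4 = 3
    · -- case c ≡ 3 (mod 4)
      refine Or.inr (Or.inr ⟨hcp, ?_⟩)
      rw [genNS_three_eq c hc hcp]
      ext n
      simp only [Set.mem_setOf_eq]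
      constructor
      · intro hn
        by_cases hge' : c ≤ n
        · exact Or.inr hge'
        · push_neg at hge'
          left
          by_cases h0 : n % 4 = 0
          · exact h0
          by_cases h2' : n % 4 = 2
          · exact absurd (climb hS0 hadd h4 hn (c - 1) (by omega) (by omega)) hc1
          · exact absurd (hodd n hn (by omega)) (by omega)
      · rintro (h | h)
        · exact hS4 n h
        · exact hge n h
    · -- c is even
      have hceven : c % 2 = 0 := by omega
      have hwit : 4 * (c / 4) + 2 ∈ S := hge _ (by omega)
      have hne : {t : ℕ | 4 * t + 2 ∈ S}.Nonempty := ⟨c / 4, hwit⟩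
      have h4t : 4 * sInf {t : ℕ | 4 * t + 2 ∈ S} + 2 ∈ S := Nat.sInf_mem hne
      set t0 := sInf {t : ℕ | 4 * t + 2 ∈ S} with ht0def
      have ht0le : t0 ≤ c / 4 := Nat.sInf_le hwit
      have ht01 : 1 ≤ t0 := by
        rcases Nat.eq_zero_or_pos t0 with h | h
        · rw [h] at h4t
          norm_num at h4t
          exact absurd h4t hn2
        · exact h
      have hmin : ∀ n ∈ S, n % 4 = 2 → 4 * t0 + 2 ≤ n := by
        intro n hn hn2'
        have hmem : (n - 2) / 4 ∈ {t : ℕ | 4 * t + 2 ∈ S} := by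
          simp only [Set.mem_setOf_eq]
          have he : 4 * ((n - 2) / 4) + 2 = n := by omega
          rwa [he]
        have := Nat.sInf_le hmem
        omega
      have hSeq : S = {n : ℕ | n % 4 = 0 ∨ (n % 2 = 0 ∧ 4 * t0 + 2 ≤ n) ∨ c ≤ n} := by
        ext n
        simp only [Set.mem_setOf_eq]
        constructor
        · intro hn
          by_cases h0 : n % 4 = 0
          · exact Or.inl h0
          by_cases h2' : n % 4 = 2
          · exact Or.inr (Or.inl ⟨by omega, hmin n hn h2'⟩)
          · exact Or.inr (Or.inr (hodd n hn (by omega)))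
        · rintro (h | ⟨h, h'⟩ | h)
          · exact hS4 n h
          · by_cases h0 : n % 4 = 0
            · exact hS4 n h0
            · exact climb hS0 hadd h4 h4t n (by omega) h'
          · exact hge n h
      have hb2 : 4 * t0 + 2 ≤ c + 2 := by omega
      by_cases hc0 : c % 4 = 0
      · refine Or.inl ⟨hc0, t0, ht01, ht0le, ?_⟩
        rw [hSeq, genNS_even_eq c t0 hc hceven ht01 hb2]
      · have hc2' : c % 4 = 2 := by omega
        have hbound : 4 * t0 + 2 ≤ c := hmin c (hge c le_rfl) hc2'
        refine Or.inr (Or.inl ⟨hc2', t0, ht01, by omega, ?_⟩)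
        rw [hSeq, genNS_even_eq c t0 hc hceven ht01 hb2]
  · rintro (⟨hc0, t, ht1, ht2, rfl⟩ | ⟨hc2', t, ht1, ht2, rfl⟩ | ⟨hc3, rfl⟩)
    · rw [genNS_even_eq c t hc (by omega) ht1 (by omega)]
      exact even_case_main c t hc (by omega) ht1 (by omega)
    · rw [genNS_even_eq c t hc (by omega) ht1 (by omega)]
      exact even_case_main c t hc (by omega) ht1 (by omega)
    · rw [genNS_three_eq c hc hc3]
      exact three_case_main c hc hc3
end

section
/- Let c be an integer with c ≥ 4 and c ≢ 1 (mod 4). The number of numerical semigroups with the Arf property having multiplicity 4 and conductor c equals c/4 if c ≡ 0 (mod 4), equals (c−2)/4 if c ≡ 2 (mod 4), and equals 1 if c ≡ 3 (mod 4). -/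
namespace ArfAux4

lemma cond_forall {S : Set ℕ} (hfin : Sᶜ.Finite) :
    ∀ n, conductorOf S ≤ n → n ∈ S := by
  have hne : {c | ∀ n, c ≤ n → n ∈ S}.Nonempty := by
    obtain ⟨b, hb⟩ := hfin.bddAbove
    refine ⟨b + 1, fun n hn => ?_⟩
    by_contra h
    have := hb (Set.mem_compl h)
    omega
  exact Nat.sInf_mem hne

lemma cond_pred {S : Set ℕ} (hfin : Sᶜ.Finite) {c : ℕ}
    (h : conductorOf S = c) (hc : 1 ≤ c) : c - 1 ∉ S := by
  intro hmem
  have hforall := cond_forall hfin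
  rw [h] at hforall
  have hmem' : c - 1 ∈ {c' | ∀ n, c' ≤ n → n ∈ S} := by
    intro n hn
    rcases Nat.eq_or_lt_of_le hn with h' | h'
    · rwa [← h']
    · exact hforall n (by omega)
  have hle : conductorOf S ≤ c - 1 := Nat.sInf_le hmem'
  rw [h] at hle
  omega

lemma cond_eq {S : Set ℕ} {c : ℕ} (h1 : ∀ n, c ≤ n → n ∈ S)
    (h2 : c - 1 ∉ S) (hc : 1 ≤ c) : conductorOf S = c := by
  have hle : conductorOf S ≤ c := Nat.sInf_le h1
  have hmem : ∀ n, conductorOf S ≤ n → n ∈ S :=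
    Nat.sInf_mem (⟨c, h1⟩ : {c' | ∀ n, c' ≤ n → n ∈ S}.Nonempty)
  have : c ≤ conductorOf S := by
    by_contra h
    push_neg at h
    exact h2 (hmem (c - 1) (by omega))
  omega

lemma mult_eq_four {S : Set ℕ} (h4 : 4 ∈ S) (h1 : 1 ∉ S) (h2 : 2 ∉ S)
    (h3 : 3 ∉ S) : multiplicityOf S = 4 := by
  have hle : multiplicityOf S ≤ 4 := Nat.sInf_le ⟨h4, by norm_num⟩
  have hmem := Nat.sInf_mem (⟨4, h4, by norm_num⟩ : {n | n ∈ S ∧ 0 < n}.Nonempty)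
  obtain ⟨hm, hmpos⟩ := hmem
  unfold multiplicityOf at *
  interval_cases h : sInf {n | n ∈ S ∧ 0 < n} <;> simp_all

lemma of_mult_four {S : Set ℕ} (hfin : Sᶜ.Finite) (h : multiplicityOf S = 4) :
    4 ∈ S ∧ 1 ∉ S ∧ 2 ∉ S ∧ 3 ∉ S := by
  have hne : {n | n ∈ S ∧ 0 < n}.Nonempty :=
    ⟨conductorOf S + 1, cond_forall hfin _ (by omega), by omega⟩
  have hmem := Nat.sInf_mem hne
  rw [show sInf {n | n ∈ S ∧ 0 < n} = multiplicityOf S from rfl, h] at hmem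
  refine ⟨hmem.1, ?_, ?_, ?_⟩ <;>
  · intro hk
    have := Nat.sInf_le (s := {n | n ∈ S ∧ 0 < n}) ⟨hk, by norm_num⟩
    rw [show sInf {n | n ∈ S ∧ 0 < n} = multiplicityOf S from rfl, h] at this
    omega

end ArfAux4

namespace ArfAux4

/-- The collection of Arf numerical semigroups with multiplicity 4 and conductor c. -/
def Acal (c : ℕ) : Set (Set ℕ) :=
  {S | IsNumericalSemigroup S ∧ HasArfProperty S ∧
    multiplicityOf S = 4 ∧ conductorOf S = c}

/-- Arf numerical semigroups containing 4 with conductor d. -/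
def Ncal (d : ℕ) : Set (Set ℕ) :=
  {T | IsNumericalSemigroup T ∧ HasArfProperty T ∧ 4 ∈ T ∧ conductorOf T = d}

def up (T : Set ℕ) : Set ℕ := {n | n = 0 ∨ (4 ≤ n ∧ n - 4 ∈ T)}

def down (S : Set ℕ) : Set ℕ := {t | t + 4 ∈ S}

lemma down_up (T : Set ℕ) : down (up T) = T := by
  ext t
  simp only [down, up, Set.mem_setOf_eq]
  constructor
  · rintro (h | ⟨-, h⟩)
    · omega
    · simpa using h
  · intro h
    right
    exact ⟨by omega, by simpa using h⟩

lemma up_down {S : Set ℕ} {c : ℕ} (hS : S ∈ Acal c) : up (down S) = S := by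
  obtain ⟨⟨h0, -, hfin⟩, -, hmult, -⟩ := hS
  obtain ⟨h4, h1, h2, h3⟩ := of_mult_four hfin hmult
  ext n
  simp only [up, down, Set.mem_setOf_eq]
  constructor
  · rintro (rfl | ⟨hn, h⟩)
    · exact h0
    · rwa [Nat.sub_add_cancel hn] at h
  · intro hn
    rcases Nat.eq_zero_or_pos n with rfl | hpos
    · exact Or.inl rfl
    · have h4n : 4 ≤ n := by
        by_contra hlt
        interval_cases n <;> simp_all
      exact Or.inr ⟨h4n, by rwa [Nat.sub_add_cancel h4n]⟩

lemma up_mem {T : Set ℕ} {d : ℕ} (hT : T ∈ Ncal d) (hd : 1 ≤ d) :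
    up T ∈ Acal (d + 4) := by
  obtain ⟨⟨h0, hadd, hfin⟩, hArf, h4, hcond⟩ := hT
  have hall : ∀ n, d ≤ n → n ∈ T := by
    intro n hn
    exact cond_forall hfin n (by omega)
  have hd1 : d - 1 ∉ T := cond_pred hfin hcond hd
  have hclos : ∀ a ∈ up T, ∀ b ∈ up T, a + b ∈ up T := by
    rintro a (rfl | ⟨ha4, ha⟩) b hb
    · simpa using hb
    · rcases hb with rfl | ⟨hb4, hb⟩
      · exact Or.inr ⟨by omega, by simpa using ha⟩
      · refine Or.inr ⟨by omega, ?_⟩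
        have := hadd _ (hadd _ ha _ hb) _ h4
        have heq : a - 4 + (b - 4) + 4 = a + b - 4 := by omega
        rwa [heq] at this
  refine ⟨⟨Or.inl rfl, hclos, ?_⟩, ?_, ?_, ?_⟩
  · refine (Set.finite_Iio (d + 4)).subset ?_
    intro n hn
    simp only [Set.mem_compl_iff, up, Set.mem_setOf_eq] at hn
    push_neg at hn
    simp only [Set.mem_Iio]
    by_contra hge
    exact (hn.2 (by omega)) (hall (n - 4) (by omega))
  · rintro x hx y hy z hz hzy hyx
    rcases hz with rfl | ⟨hz4, hz⟩
    · rw [Nat.sub_zero]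
      exact hclos _ hx _ hy
    · rcases hx with rfl | ⟨hx4, hx⟩
      · interval_cases y <;> interval_cases z <;> simp_all [up]
      · rcases hy with rfl | ⟨hy4, hy⟩
        · omega
        · have := hArf _ hx _ hy _ hz (by omega) (by omega)
          refine Or.inr ⟨by omega, ?_⟩
          have heq : x + y - z - 4 = x - 4 + (y - 4) - (z - 4) := by omega
          rwa [heq]
  · refine mult_eq_four (Or.inr ⟨le_refl 4, by simpa using h0⟩) ?_ ?_ ?_ <;>
    · rintro (h | ⟨h, -⟩) <;> omega
  · refine cond_eq ?_ ?_ (by omega)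
    · intro n hn
      exact Or.inr ⟨by omega, hall (n - 4) (by omega)⟩
    · rintro (h | ⟨h4', hmem⟩)
      · omega
      · have heq : d + 4 - 1 - 4 = d - 1 := by omega
        rw [heq] at hmem
        exact hd1 hmem

lemma down_mem {S : Set ℕ} {c : ℕ} (hS : S ∈ Acal c) (hc : 5 ≤ c) :
    down S ∈ Ncal (c - 4) := by
  obtain ⟨⟨h0, hadd, hfin⟩, hArf, hmult, hcond⟩ := hS
  obtain ⟨h4S, h1S, h2S, h3S⟩ := of_mult_four hfin hmult
  have hall : ∀ n, c ≤ n → n ∈ S := by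
    intro n hn
    exact cond_forall hfin n (by omega)
  have hc1 : c - 1 ∉ S := cond_pred hfin hcond (by omega)
  have hclos : ∀ a ∈ down S, ∀ b ∈ down S, a + b ∈ down S := by
    intro a ha b hb
    simp only [down, Set.mem_setOf_eq] at *
    rcases le_total a b with hab | hab
    · have := hArf _ hb _ ha _ h4S (by omega) (by omega)
      have heq : b + 4 + (a + 4) - 4 = a + b + 4 := by omega
      rwa [heq] at this
    · have := hArf _ ha _ hb _ h4S (by omega) (by omega)
      have heq : a + 4 + (b + 4) - 4 = a + b + 4 := by omega
      rwa [heq] at this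
  refine ⟨⟨by simpa [down] using h4S, hclos, ?_⟩, ?_, ?_, ?_⟩
  · refine (Set.finite_Iio (c - 4)).subset ?_
    intro n hn
    simp only [Set.mem_compl_iff, down, Set.mem_setOf_eq] at hn
    simp only [Set.mem_Iio]
    by_contra hge
    exact hn (hall _ (by omega))
  · intro x hx y hy z hz hzy hyx
    simp only [down, Set.mem_setOf_eq] at *
    have := hArf _ hx _ hy _ hz (by omega) (by omega)
    have heq : x + 4 + (y + 4) - (z + 4) = x + y - z + 4 := by omega
    rwa [heq] at this
  · show 4 + 4 ∈ S
    exact hadd _ h4S _ h4S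
  · refine cond_eq ?_ ?_ (by omega)
    · intro n hn
      show n + 4 ∈ S
      exact hall _ (by omega)
    · show ¬ (c - 4 - 1 + 4 ∈ S)
      have heq : c - 4 - 1 + 4 = c - 1 := by omega
      rw [heq]
      exact hc1

lemma Acal_eq_image {c : ℕ} (hc : 5 ≤ c) : Acal c = up '' Ncal (c - 4) := by
  ext S
  constructor
  · intro hS
    exact ⟨down S, down_mem hS hc, up_down hS⟩
  · rintro ⟨T, hT, rfl⟩
    have := up_mem hT (d := c - 4) (by omega)
    rwa [show c - 4 + 4 = c by omega] at this

lemma Acal_ncard {c : ℕ} (hc : 5 ≤ c) : (Acal c).ncard = (Ncal (c - 4)).ncard := by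
  rw [Acal_eq_image hc]
  exact Set.ncard_image_of_injOn (fun T1 _ T2 _ h => by
    rw [← down_up T1, h, down_up])

end ArfAux4

namespace ArfAux4

/-- Even numbers together with everything ≥ d. -/
def Ev (d : ℕ) : Set ℕ := {n | n % 2 = 0 ∨ d ≤ n}

lemma Ev_mem {d : ℕ} (hd : 4 ≤ d) (hde : d % 2 = 0) : Ev d ∈ Ncal d := by
  have hclos : ∀ a ∈ Ev d, ∀ b ∈ Ev d, a + b ∈ Ev d := by
    intro a ha b hb
    simp only [Ev, Set.mem_setOf_eq] at *
    omega
  refine ⟨⟨Or.inl rfl, hclos, ?_⟩, ?_, Or.inl rfl, ?_⟩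
  · refine (Set.finite_Iio d).subset ?_
    intro n hn
    simp only [Set.mem_compl_iff, Ev, Set.mem_setOf_eq] at hn
    simp only [Set.mem_Iio]
    omega
  · intro x hx y hy z hz hzy hyx
    simp only [Ev, Set.mem_setOf_eq] at *
    omega
  · refine cond_eq (fun n hn => Or.inr hn) ?_ (by omega)
    simp only [Ev, Set.mem_setOf_eq]
    omega

lemma all_mem_of_one {T : Set ℕ} (h0 : 0 ∈ T) (hadd : ∀ a ∈ T, ∀ b ∈ T, a + b ∈ T)
    (h1 : 1 ∈ T) : ∀ n, n ∈ T := by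
  intro n
  induction n with
  | zero => exact h0
  | succ k ih => exact hadd k ih 1 h1

lemma evens_mem_of_two {T : Set ℕ} (h0 : 0 ∈ T) (hadd : ∀ a ∈ T, ∀ b ∈ T, a + b ∈ T)
    (h2 : 2 ∈ T) : ∀ k, 2 * k ∈ T := by
  intro k
  induction k with
  | zero => exact h0
  | succ k ih =>
    have := hadd _ ih _ h2
    rwa [show 2 * k + 2 = 2 * (k + 1) by ring] at this

lemma Ncal_partition {d : ℕ} (hd : 4 ≤ d) :
    Ncal d = if d % 2 = 0 then insert (Ev d) (Acal d) else Acal d := by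
  ext T
  constructor
  · rintro ⟨⟨h0, hadd, hfin⟩, hArf, h4, hcond⟩
    have hall : ∀ n, d ≤ n → n ∈ T := by
      intro n hn
      exact cond_forall hfin n (by omega)
    have hd1 : d - 1 ∉ T := cond_pred hfin hcond (by omega)
    have h1 : 1 ∉ T := by
      intro h1
      exact hd1 (all_mem_of_one h0 hadd h1 _)
    by_cases h2 : 2 ∈ T
    · -- multiplicity 2: T = Ev d
      have heven := evens_mem_of_two h0 hadd h2
      have hde : d % 2 = 0 := by
        by_contra hodd
        exact hd1 (by rw [show d - 1 = 2 * ((d - 1) / 2) by omega]; exact heven _)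
      have hTeq : T = Ev d := by
        ext n
        constructor
        · intro hn
          by_cases hnd : d ≤ n
          · exact Or.inr hnd
          · left
            by_contra hno
            have hchain : ∀ k, n + 2 * k ∈ T := fun k => hadd _ hn _ (heven k)
            have := hchain ((d - 1 - n) / 2)
            rw [show n + 2 * ((d - 1 - n) / 2) = d - 1 by omega] at this
            exact hd1 this
        · rintro (hn | hn)
          · rw [show n = 2 * (n / 2) by omega]
            exact heven _
          · exact hall _ hn
      rw [if_pos hde]
      exact Or.inl hTeq
    · by_cases h3 : 3 ∈ T
      · -- multiplicity 3: forces d = 3, impossible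
        exfalso
        have h5 : 5 ∈ T := by
          have := hArf 4 h4 4 h4 3 h3 (by omega) (by omega)
          simpa using this
        have hge3 : ∀ n, 3 ≤ n → n ∈ T := by
          intro n
          induction n using Nat.strong_induction_on with
          | _ n ih =>
            intro hn
            by_cases hn5 : n ≤ 5
            · interval_cases n
              · exact h3
              · exact h4
              · exact h5
            · have := hadd _ (ih (n - 3) (by omega) (by omega)) _ h3
              rwa [show n - 3 + 3 = n by omega] at this
        exact hd1 (hge3 _ (by omega))
      · -- multiplicity 4
        have hT : T ∈ Acal d :=
          ⟨⟨h0, hadd, hfin⟩, hArf, mult_eq_four h4 h1 h2 h3, hcond⟩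
        split
        · exact Or.inr hT
        · exact hT
  · intro hT
    have hA : Acal d ⊆ Ncal d := by
      rintro T' ⟨hNS, hArf, hmult, hcond⟩
      exact ⟨hNS, hArf, (of_mult_four hNS.2.2 hmult).1, hcond⟩
    by_cases hde : d % 2 = 0
    · rw [if_pos hde] at hT
      rcases hT with rfl | hT
      · exact Ev_mem hd hde
      · exact hA hT
    · rw [if_neg hde] at hT
      exact hA hT

end ArfAux4

namespace ArfAux4

lemma finite_above (c : ℕ) : {S : Set ℕ | ∀ n, c ≤ n → n ∈ S}.Finite := by
  classical
  have hsub : {S : Set ℕ | ∀ n, c ≤ n → n ∈ S} ⊆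
      (fun t : Finset ℕ => (↑t ∪ Set.Ici c : Set ℕ)) '' ↑(Finset.range c).powerset := by
    intro S hS
    refine ⟨(Finset.range c).filter (· ∈ S), ?_, ?_⟩
    · simp only [Finset.coe_powerset, Set.mem_preimage, Set.mem_powerset_iff,
        Finset.coe_subset]
      exact Finset.filter_subset _ _
    · ext n
      simp only [Set.mem_union, Finset.coe_filter, Set.mem_setOf_eq,
        Finset.mem_range, Set.mem_Ici]
      constructor
      · rintro (⟨-, h⟩ | h)
        · exact h
        · exact hS n h
      · intro h
        by_cases hn : n < c
        · exact Or.inl ⟨hn, h⟩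
        · exact Or.inr (by omega)
  exact (Set.Finite.image _ ((Finset.range c).powerset.finite_toSet)).subset hsub

lemma Acal_finite (c : ℕ) : (Acal c).Finite := by
  refine (finite_above c).subset ?_
  rintro S ⟨⟨-, -, hfin⟩, -, -, hcond⟩
  intro n hn
  exact cond_forall hfin n (by omega)

lemma Acal_four : Acal 4 = {{n | n = 0 ∨ 4 ≤ n}} := by
  ext S
  constructor
  · rintro ⟨⟨h0, hadd, hfin⟩, hArf, hmult, hcond⟩
    obtain ⟨h4, h1, h2, h3⟩ := of_mult_four hfin hmult
    have hall : ∀ n, 4 ≤ n → n ∈ S := fun n hn => cond_forall hfin n (by omega)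
    simp only [Set.mem_singleton_iff]
    ext n
    simp only [Set.mem_setOf_eq]
    constructor
    · intro hn
      by_contra h
      push_neg at h
      obtain ⟨hz, hlt⟩ := h
      interval_cases n <;> simp_all
    · rintro (rfl | hn)
      · exact h0
      · exact hall n hn
  · rintro rfl
    refine ⟨⟨Or.inl rfl, ?_, ?_⟩, ?_, ?_, ?_⟩
    · intro a ha b hb
      simp only [Set.mem_setOf_eq] at *
      omega
    · refine (Set.finite_Iio 4).subset ?_
      intro n hn
      simp only [Set.mem_compl_iff, Set.mem_setOf_eq] at hn
      simp only [Set.mem_Iio]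
      omega
    · intro x hx y hy z hz hzy hyx
      simp only [Set.mem_setOf_eq] at *
      omega
    · refine mult_eq_four ?_ ?_ ?_ ?_ <;> simp [Set.mem_setOf_eq]
    · refine cond_eq (fun n hn => Or.inr hn) ?_ (by omega)
      simp only [Set.mem_setOf_eq]
      omega

lemma Ncal_two : Ncal 2 = {{n | n ≠ 1}} := by
  ext T
  constructor
  · rintro ⟨⟨h0, hadd, hfin⟩, hArf, h4, hcond⟩
    have hall : ∀ n, 2 ≤ n → n ∈ T := fun n hn => cond_forall hfin n (by omega)
    have h1 : 1 ∉ T := by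
      have := cond_pred hfin hcond (by omega)
      simpa using this
    simp only [Set.mem_singleton_iff]
    ext n
    simp only [Set.mem_setOf_eq]
    constructor
    · intro hn h
      exact h1 (h ▸ hn)
    · intro hn
      rcases Nat.eq_zero_or_pos n with rfl | hpos
      · exact h0
      · exact hall n (by omega)
  · rintro rfl
    refine ⟨⟨by simp, ?_, ?_⟩, ?_, by simp, ?_⟩
    · intro a ha b hb
      simp only [Set.mem_setOf_eq] at *
      omega
    · refine (Set.finite_Iio 2).subset ?_
      intro n hn
      simp only [Set.mem_compl_iff, Set.mem_setOf_eq, not_not] at hn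
      simp only [Set.mem_Iio]
      omega
    · intro x hx y hy z hz hzy hyx
      simp only [Set.mem_setOf_eq] at *
      omega
    · refine cond_eq (fun n hn => by simp only [Set.mem_setOf_eq]; omega) ?_ (by omega)
      simp only [Set.mem_setOf_eq]
      omega

lemma Ncal_three : Ncal 3 = {{n | n = 0 ∨ 3 ≤ n}} := by
  ext T
  constructor
  · rintro ⟨⟨h0, hadd, hfin⟩, hArf, h4, hcond⟩
    have hall : ∀ n, 3 ≤ n → n ∈ T := fun n hn => cond_forall hfin n (by omega)
    have h2 : 2 ∉ T := by
      have := cond_pred hfin hcond (by omega)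
      simpa using this
    have h1 : 1 ∉ T := by
      intro h1
      exact h2 (hadd 1 h1 1 h1)
    simp only [Set.mem_singleton_iff]
    ext n
    simp only [Set.mem_setOf_eq]
    constructor
    · intro hn
      by_contra h
      push_neg at h
      obtain ⟨hz, hlt⟩ := h
      interval_cases n <;> simp_all
    · rintro (rfl | hn)
      · exact h0
      · exact hall n hn
  · rintro rfl
    refine ⟨⟨Or.inl rfl, ?_, ?_⟩, ?_, by simp only [Set.mem_setOf_eq]; omega, ?_⟩
    · intro a ha b hb
      simp only [Set.mem_setOf_eq] at *
      omega
    · refine (Set.finite_Iio 3).subset ?_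
      intro n hn
      simp only [Set.mem_compl_iff, Set.mem_setOf_eq] at hn
      simp only [Set.mem_Iio]
      omega
    · intro x hx y hy z hz hzy hyx
      simp only [Set.mem_setOf_eq] at *
      omega
    · refine cond_eq (fun n hn => Or.inr hn) ?_ (by omega)
      simp only [Set.mem_setOf_eq]
      omega

end ArfAux4

namespace ArfAux4

lemma main_count : ∀ c : ℕ, 4 ≤ c → c % 4 ≠ 1 →
    (Acal c).ncard =
      if c % 4 = 0 then c / 4 else if c % 4 = 2 then (c - 2) / 4 else 1 := by
  intro c
  induction c using Nat.strong_induction_on with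
  | _ c ih =>
    intro hc h1
    by_cases hc4 : c = 4
    · subst hc4
      rw [Acal_four]
      simp
    · by_cases hc6 : c = 6
      · subst hc6
        rw [Acal_ncard (by omega), show (6 : ℕ) - 4 = 2 from rfl, Ncal_two]
        simp
      · by_cases hc7 : c = 7
        · subst hc7
          rw [Acal_ncard (by omega), show (7 : ℕ) - 4 = 3 from rfl, Ncal_three]
          simp
        · -- c ≥ 8
          have hc8 : 8 ≤ c := by omega
          have hstep := Acal_ncard (c := c) (by omega)
          have hpart := Ncal_partition (d := c - 4) (by omega)
          have hih := ih (c - 4) (by omega) (by omega) (by omega)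
          by_cases hde : (c - 4) % 2 = 0
          · rw [if_pos hde] at hpart
            have hnot : Ev (c - 4) ∉ Acal (c - 4) := by
              rintro ⟨hNS, -, hmult, -⟩
              have h2 : (2 : ℕ) ∉ Ev (c - 4) := (of_mult_four hNS.2.2 hmult).2.2.1
              exact h2 (Or.inl rfl)
            have hins : (Ncal (c - 4)).ncard = (Acal (c - 4)).ncard + 1 := by
              rw [hpart]
              exact Set.ncard_insert_of_notMem hnot (Acal_finite _)
            have hm : c % 4 = 0 ∨ c % 4 = 2 := by omega
            rcases hm with hm | hm
            · rw [if_pos (show (c - 4) % 4 = 0 by omega)] at hih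
              rw [hstep, hins, hih, if_pos hm]
              omega
            · rw [if_neg (show ¬ (c - 4) % 4 = 0 by omega),
                if_pos (show (c - 4) % 4 = 2 by omega)] at hih
              rw [hstep, hins, hih, if_neg (show ¬ c % 4 = 0 by omega), if_pos hm]
              omega
          · rw [if_neg hde] at hpart
            have hm : c % 4 = 3 := by omega
            rw [if_neg (show ¬ (c - 4) % 4 = 0 by omega),
              if_neg (show ¬ (c - 4) % 4 = 2 by omega)] at hih
            rw [hstep, hpart, hih, if_neg (show ¬ c % 4 = 0 by omega),
              if_neg (show ¬ c % 4 = 2 by omega)]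

end ArfAux4


theorem arf_multiplicity_four_count (c : ℕ) (hc : 4 ≤ c) (h1 : c % 4 ≠ 1) :
    Set.ncard {S : Set ℕ | IsNumericalSemigroup S ∧ HasArfProperty S ∧
        multiplicityOf S = 4 ∧ conductorOf S = c} =
      if c % 4 = 0 then c / 4
      else if c % 4 = 2 then (c - 2) / 4
      else 1 := by
  exact ArfAux4.main_count c hc h1
end
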